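/- Assume Hypothesis A: ∫_{p^Mℤ_p} Q₀(|z|_p)dz ∈ (1/2, 1). Then the matrix W⁰ is strictly diagonally dominant with positive diagonal entries, i.e. W⁰_{II} > Σ_{J≠I}|W⁰_{IJ}| for every I ∈ G_M; consequently W⁰ is nonsingular and every eigenvalue of W⁰ has positive real part, and if W⁰ is moreover symmetric then all its eigenvalues are positive. -/

import Mathlib

open MeasureTheory Filter
open scoped Real Topology ENNReal NNReal

namespace PadicES

variable (p : ℕ) [Fact p.Prime]

noncomputable instance : MeasurableSpace ℚ_[p] := borel _
instance : BorelSpace ℚ_[p] := ⟨rfl⟩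
noncomputable instance : DecidableEq ℚ_[p] := Classical.decEq _

/-- The closed unit ball `ℤ_p` viewed as a subset of `ℚ_p`. -/
def unitBall : Set ℚ_[p] := {x : ℚ_[p] | ‖x‖ ≤ 1}

lemma isCompact_unitBall : IsCompact (unitBall p) := by
  have : unitBall p = Metric.closedBall (0 : ℚ_[p]) 1 := by
    ext x; simp [unitBall, Metric.mem_closedBall, dist_eq_norm]
  rw [this]; exact isCompact_closedBall _ _

lemma interior_unitBall_nonempty : (interior (unitBall p)).Nonempty := by
  have : unitBall p = Metric.closedBall (0 : ℚ_[p]) 1 := by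
    ext x; simp [unitBall, Metric.mem_closedBall, dist_eq_norm]
  rw [this, (IsUltrametricDist.isOpen_closedBall (0 : ℚ_[p]) one_ne_zero).interior_eq]
  exact ⟨0, by simp⟩

/-- The Haar measure `dx` on `(ℚ_p, +)`, normalized so that `ℤ_p` has measure `1`. -/
noncomputable def haar : Measure ℚ_[p] :=
  Measure.addHaarMeasure ⟨⟨unitBall p, isCompact_unitBall p⟩, interior_unitBall_nonempty p⟩

lemma norm_scaled_le_one (y : ℚ_[p]) (h : ¬ ‖y‖ ≤ 1) :
    ‖(p : ℚ_[p]) ^ ((-y.valuation).toNat) * y‖ ≤ 1 := by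
  have hy : y ≠ 0 := by rintro rfl; simp at h
  have hv : y.valuation < 0 := by
    by_contra hv
    push_neg at hv
    exact h ((Padic.norm_le_one_iff_val_nonneg (p := p) y).mpr hv)
  have hp0 : (0 : ℝ) < (p : ℝ) := by
    exact_mod_cast (Fact.out : p.Prime).pos
  rw [norm_mul, norm_pow, Padic.norm_p, Padic.norm_eq_zpow_neg_valuation hy]
  rw [inv_pow, ← zpow_natCast, Int.toNat_of_nonneg (by omega)]
  rw [← zpow_neg, ← zpow_add₀ (ne_of_gt hp0)]
  simp

/-- The `p`-adic fractional part `{y}_p`, as a rational number. -/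
noncomputable def fract (y : ℚ_[p]) : ℚ :=
  if h : ‖y‖ ≤ 1 then 0
  else
    ((PadicInt.toZModPow ((-y.valuation).toNat)
        (⟨(p : ℚ_[p]) ^ ((-y.valuation).toNat) * y, norm_scaled_le_one p y h⟩ :
          ℤ_[p])).val : ℚ) / (p : ℚ) ^ ((-y.valuation).toNat)

/-- The standard additive character `χ_p(y) = exp(2 π i {y}_p)` of `(ℚ_p,+)`. -/
noncomputable def stdChar (y : ℚ_[p]) : ℂ :=
  Complex.exp (2 * (Real.pi : ℂ) * Complex.I * (fract p y : ℂ))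

/-- The ball `a + p^R ℤ_p` of radius `p^{-R}` centered at `a`. -/
def ballSet (R : ℤ) (a : ℚ_[p]) : Set ℚ_[p] := {x : ℚ_[p] | ‖x - a‖ ≤ (p : ℝ) ^ (-R)}

/-- `Ω(p^R |x - a|_p)`: the indicator function of the ball `a + p^R ℤ_p` (complex valued). -/
noncomputable def ballInd (R : ℤ) (a x : ℚ_[p]) : ℂ := if ‖x - a‖ ≤ (p : ℝ) ^ (-R) then 1 else 0

/-- `Ω(p^R |x - a|_p)`: the indicator function of the ball `a + p^R ℤ_p` (real valued). -/
noncomputable def ballIndR (R : ℤ) (a x : ℚ_[p]) : ℝ := if ‖x - a‖ ≤ (p : ℝ) ^ (-R) then 1 else 0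

/-- The Kozyrev wavelet
`Ψ_{rnj}(x) = p^{-r/2} χ_p(p^{-1} j (p^r x - n)) Ω(|p^r x - n|_p)`. -/
noncomputable def wavelet (r : ℤ) (n : ℚ_[p]) (j : ℕ) (x : ℚ_[p]) : ℂ :=
  (((p : ℝ) ^ (-(r : ℝ) / 2) : ℝ) : ℂ) *
    stdChar p ((p : ℚ_[p])⁻¹ * (j : ℚ_[p]) * ((p : ℚ_[p]) ^ r * x - n)) *
    ballInd p 0 0 ((p : ℚ_[p]) ^ r * x - n)

/-- The Fourier transform `ĝ(ξ) = ∫ χ_p(ξ x) g(x) dx` of a complex-valued function. -/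
noncomputable def fourierT (g : ℚ_[p] → ℂ) (ξ : ℚ_[p]) : ℂ :=
  ∫ x, stdChar p (ξ * x) * g x ∂(haar p)

/-- A function on `ℚ_p` is radial if it only depends on `|x|_p`. -/
def IsRadial (g : ℚ_[p] → ℝ) : Prop := ∀ x y : ℚ_[p], ‖x‖ = ‖y‖ → g x = g y

/-- Convolution `(g ∗ φ)(x) = ∫ g(x - y) φ(y) dy` of a real kernel with a complex function. -/
noncomputable def conv (g : ℚ_[p] → ℝ) (φ : ℚ_[p] → ℂ) (x : ℚ_[p]) : ℂ :=
  ∫ y, (g (x - y) : ℂ) * φ y ∂(haar p)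

/-- Real-valued convolution. -/
noncomputable def convR (g φ : ℚ_[p] → ℝ) (x : ℚ_[p]) : ℝ :=
  ∫ y, g (x - y) * φ y ∂(haar p)

/-- The fitness function `f(x) = Σ_{I ∈ G_M} f(I) Ω(p^M |x - I|_p)`. -/
noncomputable def fitness (fc : ℚ_[p] → ℝ) (M : ℕ) (G : Finset ℚ_[p]) (x : ℚ_[p]) : ℝ :=
  ∑ I ∈ G, fc I * ballIndR p M I x

/-- The matrix `W⁰` of the operator `W₀ φ = Q₀ ∗ (f φ)` on the span of the
indicator functions of the balls `I + p^M ℤ_p`, `I ∈ G_M`. -/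
noncomputable def Wmat (Q₀ fc : ℚ_[p] → ℝ) (M : ℕ) (G : Finset ℚ_[p]) :
    Matrix {I : ℚ_[p] // I ∈ G} {I : ℚ_[p] // I ∈ G} ℝ :=
  fun I J =>
    if I = J then fc I.1 * ∫ z in ballSet p M 0, Q₀ z ∂(haar p)
    else fc I.1 * Q₀ (J.1 - I.1) * (p : ℝ) ^ (-(M : ℤ))


/-- The operator `W₀ φ = Q₀ ∗ (f φ)` (complex-valued version). -/
noncomputable def Wop (Q₀ fc : ℚ_[p] → ℝ) (M : ℕ) (G : Finset ℚ_[p]) (φ : ℚ_[p] → ℂ)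
    (x : ℚ_[p]) : ℂ :=
  conv p Q₀ (fun y => ((fitness p fc M G y : ℝ) : ℂ) * φ y) x

/-- The operator `W₀ φ = Q₀ ∗ (f φ)` (real-valued version). -/
noncomputable def WopR (Q₀ fc : ℚ_[p] → ℝ) (M : ℕ) (G : Finset ℚ_[p]) (φ : ℚ_[p] → ℝ)
    (x : ℚ_[p]) : ℝ :=
  convR p Q₀ (fun y => fitness p fc M G y * φ y) x

/-- The `p`-adic heat kernel `Z(ξ; σ, α) = ∫ χ_p(ξ x) e^{-σ |x|_p^α} dx`. -/
noncomputable def heatK (σ α : ℝ) (ξ : ℚ_[p]) : ℂ :=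
  ∫ x, stdChar p (ξ * x) * ((Real.exp (-σ * ‖x‖ ^ α) : ℝ) : ℂ) ∂(haar p)


/-! ### Auxiliary lemmas for Statement 9 -/

lemma haar_unitBall : haar p (unitBall p) = 1 :=
  Measure.addHaarMeasure_self
    (K₀ := ⟨⟨unitBall p, isCompact_unitBall p⟩, interior_unitBall_nonempty p⟩)

instance : (haar p).IsAddLeftInvariant := Measure.isAddLeftInvariant_addHaarMeasure _

lemma measurableSet_ballSet (R : ℤ) (a : ℚ_[p]) : MeasurableSet (ballSet p R a) := by
  have : ballSet p R a = Metric.closedBall a ((p:ℝ)^(-R)) := by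
    ext x; simp [ballSet, Metric.mem_closedBall, dist_eq_norm]
  rw [this]; exact measurableSet_closedBall

lemma haar_ballSet_translate (R : ℤ) (a : ℚ_[p]) :
    haar p (ballSet p R a) = haar p (ballSet p R 0) := by
  have h : ballSet p R a = (fun x => (-a) + x) ⁻¹' (ballSet p R 0) := by
    ext x; simp only [ballSet, Set.mem_preimage, Set.mem_setOf_eq, sub_zero, neg_add_eq_sub]
  rw [h, measure_preimage_add]

lemma exists_near_int (y : ℚ_[p]) (hy : ‖y‖ ≤ 1) :
    ∃ j : ℕ, j < p ∧ ‖y - (j : ℚ_[p])‖ ≤ (p : ℝ)⁻¹ := by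
  set z : ℤ_[p] := ⟨y, hy⟩ with hz
  refine ⟨z.appr 1, by simpa using z.appr_lt 1, ?_⟩
  have hs := PadicInt.appr_spec 1 z
  rw [Ideal.mem_span_singleton] at hs
  obtain ⟨c, hc⟩ := hs
  have h1 : ‖z - (z.appr 1 : ℤ_[p])‖ ≤ (p : ℝ)⁻¹ := by
    rw [hc]
    have h2 : ‖(p : ℤ_[p]) ^ 1 * c‖ = ‖(p : ℤ_[p])‖ * ‖c‖ := by
      rw [pow_one, norm_mul]
    rw [h2, PadicInt.norm_p]
    calc (p:ℝ)⁻¹ * ‖c‖ ≤ (p:ℝ)⁻¹ * 1 :=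
          mul_le_mul_of_nonneg_left c.norm_le_one (by positivity)
      _ = (p : ℝ)⁻¹ := mul_one _
  have : ((z - (z.appr 1 : ℤ_[p]) : ℤ_[p]) : ℚ_[p]) = y - (z.appr 1 : ℚ_[p]) := by
    push_cast [hz]
    rfl
  rwa [PadicInt.norm_def, this] at h1

lemma haar_ballSet_nat (k : ℕ) :
    haar p (ballSet p (k : ℤ) 0) = ((p : ℝ≥0∞) ^ k)⁻¹ := by
  have hp : (1 : ℝ) < p := by exact_mod_cast (Fact.out : p.Prime).one_lt
  have hp0 : (0 : ℝ) < p := by linarith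
  induction k with
  | zero =>
      have : ballSet p (0 : ℤ) 0 = unitBall p := by
        ext x; simp [ballSet, unitBall]
      simp [this, haar_unitBall]
  | succ k ih =>
      set c : ℕ → ℚ_[p] := fun j => (j : ℚ_[p]) * (p : ℚ_[p]) ^ k with hcdef
      have hcover : ballSet p (k : ℤ) 0 =
          ⋃ j ∈ Finset.range p, ballSet p ((k+1 : ℕ) : ℤ) (c j) := by
        ext x
        simp only [Set.mem_iUnion, Finset.mem_range, ballSet, Set.mem_setOf_eq, sub_zero]
        constructor
        · intro hx
          have hy : ‖x / (p : ℚ_[p]) ^ k‖ ≤ 1 := by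
            rw [norm_div, Padic.norm_p_pow]
            rw [div_le_one (by positivity)]
            simpa using hx
          obtain ⟨j, hjp, hj⟩ := exists_near_int p _ hy
          refine ⟨j, hjp, ?_⟩
          have hne : ((p : ℚ_[p]) ^ k) ≠ 0 := by
            apply pow_ne_zero
            exact_mod_cast (Fact.out : p.Prime).ne_zero
          have hxc : x - c j = (x / (p : ℚ_[p]) ^ k - (j : ℚ_[p])) * (p : ℚ_[p]) ^ k := by
            field_simp [hcdef]
            try ring
          rw [hxc, norm_mul, Padic.norm_p_pow]
          have hstep : ‖x / (p : ℚ_[p]) ^ k - (j : ℚ_[p])‖ * (p:ℝ) ^ (-(k:ℤ)) ≤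
              (p : ℝ)⁻¹ * (p:ℝ) ^ (-(k:ℤ)) :=
            mul_le_mul_of_nonneg_right hj (by positivity)
          refine hstep.trans (le_of_eq ?_)
          rw [← zpow_neg_one, ← zpow_add₀ (ne_of_gt hp0)]
          norm_num
        · rintro ⟨j, hjp, hj⟩
          have hcj : ‖c j‖ ≤ (p : ℝ) ^ (-(k:ℤ)) := by
            rw [hcdef, norm_mul, Padic.norm_p_pow]
            have hj1 : ‖((j:ℤ) : ℚ_[p])‖ ≤ 1 := Padic.norm_int_le_one _
            push_cast at hj1
            calc ‖(j : ℚ_[p])‖ * (p:ℝ) ^ (-(k:ℤ)) ≤ 1 * (p:ℝ) ^ (-(k:ℤ)) :=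
                  mul_le_mul_of_nonneg_right hj1 (by positivity)
              _ = _ := one_mul _
          calc ‖x‖ = ‖(x - c j) + c j‖ := by ring_nf
            _ ≤ max ‖x - c j‖ ‖c j‖ := Padic.nonarchimedean _ _
            _ ≤ (p : ℝ) ^ (-(k:ℤ)) := by
                apply max_le _ hcj
                refine hj.trans ?_
                apply zpow_le_zpow_right₀ (le_of_lt hp)
                omega
      have hdisj : Set.Pairwise (↑(Finset.range p))
          (Function.onFun Disjoint fun j => ballSet p ((k+1 : ℕ) : ℤ) (c j)) := by
        intro i hi j hj hij
        simp only [Finset.coe_range, Set.mem_Iio] at hi hj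
        rw [Function.onFun, Set.disjoint_left]
        intro x hxi hxj
        simp only [ballSet, Set.mem_setOf_eq] at hxi hxj
        have hd : ‖c i - c j‖ ≤ (p:ℝ) ^ (-((k:ℕ)+1:ℤ)) := by
          calc ‖c i - c j‖ = ‖(c i - x) + (x - c j)‖ := by ring_nf
            _ ≤ max ‖c i - x‖ ‖x - c j‖ := Padic.nonarchimedean _ _
            _ ≤ _ := by
                apply max_le _ hxj
                rw [norm_sub_rev]; exact hxi
        have : c i - c j = ((i : ℤ) - (j : ℤ) : ℤ) * (p : ℚ_[p]) ^ k := by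
          rw [hcdef]; push_cast; ring
        rw [this, norm_mul, Padic.norm_p_pow] at hd
        have hone : ‖(((i:ℤ) - (j:ℤ) : ℤ) : ℚ_[p])‖ = 1 := by
          have hle := Padic.norm_int_le_one (p := p) ((i:ℤ) - (j:ℤ))
          rcases lt_or_eq_of_le hle with h | h
          · exfalso
            rw [Padic.norm_intCast_lt_one_iff] at h
            have habs : p ∣ ((i:ℤ) - (j:ℤ)).natAbs := by
              have h2 := Int.natAbs_dvd_natAbs.mpr h
              simpa using h2
            have hge : p ≤ ((i:ℤ)-(j:ℤ)).natAbs := Nat.le_of_dvd (by omega) habs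
            omega
          · exact h
        rw [hone, one_mul] at hd
        have : (p:ℝ) ^ (-((k:ℕ)+1:ℤ)) < (p:ℝ) ^ (-(k:ℤ)) := by
          apply zpow_lt_zpow_right₀ hp; omega
        linarith
      have hpne : (p:ℝ≥0∞) ≠ 0 := by
        exact_mod_cast (Fact.out : p.Prime).ne_zero
      have hptop : (p:ℝ≥0∞) ≠ ⊤ := ENNReal.natCast_ne_top p
      have hsum : ((p:ℝ≥0∞) ^ k)⁻¹ = (p : ℝ≥0∞) * haar p (ballSet p ((k+1:ℕ):ℤ) 0) := by
        rw [← ih, hcover, measure_biUnion_finset hdisj (fun j _ => measurableSet_ballSet p _ _)]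
        simp_rw [haar_ballSet_translate]
        simp [Finset.sum_const, Finset.card_range, nsmul_eq_mul]
      have hkey : (p:ℝ≥0∞) * ((p:ℝ≥0∞) ^ (k+1))⁻¹ = ((p:ℝ≥0∞) ^ k)⁻¹ := by
        rw [pow_succ, ENNReal.mul_inv (Or.inl (pow_ne_zero _ hpne)) (Or.inr hpne)]
        calc (p:ℝ≥0∞) * (((p:ℝ≥0∞)^k)⁻¹ * ((p:ℝ≥0∞))⁻¹)
            = ((p:ℝ≥0∞) * ((p:ℝ≥0∞))⁻¹) * ((p:ℝ≥0∞)^k)⁻¹ := by ring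
          _ = ((p:ℝ≥0∞)^k)⁻¹ := by rw [ENNReal.mul_inv_cancel hpne hptop, one_mul]
      exact (ENNReal.mul_right_inj hpne hptop).mp (by rw [← hsum, hkey])

lemma setIntegral_ballSet_of_norm_gt (Q₀ : ℚ_[p] → ℝ) (hrad : IsRadial p Q₀)
    (Mk : ℕ) (c : ℚ_[p]) (hc : (p:ℝ) ^ (-(Mk:ℤ)) < ‖c‖) :
    ∫ z in ballSet p (Mk:ℤ) c, Q₀ z ∂(haar p) = Q₀ c * (p:ℝ) ^ (-(Mk:ℤ)) := by
  have hconst : Set.EqOn Q₀ (fun _ => Q₀ c) (ballSet p (Mk:ℤ) c) := by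
    intro z hz
    apply hrad
    have hzc : ‖z - c‖ < ‖c‖ := lt_of_le_of_lt hz hc
    calc ‖z‖ = ‖(z - c) + c‖ := by ring_nf
      _ = max ‖z-c‖ ‖c‖ := Padic.add_eq_max_of_ne (ne_of_lt hzc)
      _ = ‖c‖ := max_eq_right hzc.le
  rw [setIntegral_congr_fun (measurableSet_ballSet p _ c) hconst, setIntegral_const, measureReal_def,
    haar_ballSet_translate, haar_ballSet_nat]
  rw [ENNReal.toReal_inv, ENNReal.toReal_pow, ENNReal.toReal_natCast, smul_eq_mul, mul_comm]
  rw [zpow_neg, zpow_natCast]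

/-- Under Hypothesis A, the matrix `W⁰` is strictly diagonally dominant with
positive diagonal, hence nonsingular, all its eigenvalues have positive real part, and if it
is symmetric then all its eigenvalues are positive. -/
theorem Wmat_diagonally_dominant (p : ℕ) [Fact p.Prime] (Q₀ : ℚ_[p] → ℝ)
    (hpos : ∀ x : ℚ_[p], 0 ≤ Q₀ x)
    (hrad : IsRadial p Q₀)
    (hsupp : ∀ x : ℚ_[p], ¬ ‖x‖ ≤ 1 → Q₀ x = 0)
    (hint : Integrable Q₀ (haar p))
    (hone : ∫ x in unitBall p, Q₀ x ∂(haar p) = 1)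
    (M : ℕ) (hM : 1 ≤ M) (G : Finset ℚ_[p])
    (hGsub : ∀ I ∈ G, ‖I‖ ≤ 1)
    (hG : ∀ x : ℚ_[p], ‖x‖ ≤ 1 → ∃! I : ℚ_[p], I ∈ G ∧ ‖x - I‖ ≤ (p : ℝ) ^ (-(M : ℤ)))
    (fc : ℚ_[p] → ℝ) (hfc : ∀ I ∈ G, 0 < fc I)
    (hA : (∫ z in ballSet p M 0, Q₀ z ∂(haar p)) ∈ Set.Ioo (1/2 : ℝ) 1) :
    (∀ I : {I : ℚ_[p] // I ∈ G},
      (0 < Wmat p Q₀ fc M G I I ∧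
        ∑ J ∈ Finset.univ.erase I, |Wmat p Q₀ fc M G I J| < Wmat p Q₀ fc M G I I)) ∧
    IsUnit (Wmat p Q₀ fc M G) ∧
    (∀ z ∈ spectrum ℂ ((Wmat p Q₀ fc M G).map Complex.ofReal), 0 < z.re) ∧
    ((Wmat p Q₀ fc M G).IsSymm → ∀ μ ∈ spectrum ℝ (Wmat p Q₀ fc M G), 0 < μ) := by
  classical
  obtain ⟨hA1, hA2⟩ := hA
  set A := ∫ z in ballSet p M 0, Q₀ z ∂(haar p) with hAdef
  have hp : (1:ℝ) < p := by exact_mod_cast (Fact.out : p.Prime).one_lt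
  have hpM : (0:ℝ) < (p:ℝ) ^ (-(M:ℤ)) := by positivity
  have hpMle1 : (p:ℝ) ^ (-(M:ℤ)) ≤ 1 := by
    calc (p:ℝ) ^ (-(M:ℤ)) ≤ (p:ℝ) ^ (0:ℤ) := zpow_le_zpow_right₀ hp.le (by omega)
      _ = 1 := zpow_zero _
  have key : ∀ I ∈ G, ∑ J ∈ G.erase I, Q₀ (J - I) * (p:ℝ) ^ (-(M:ℤ)) = 1 - A := by
    intro I hI
    have hInorm := hGsub I hI
    have hsub1 : ∀ J ∈ G, ‖J - I‖ ≤ 1 := by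
      intro J hJ
      refine le_trans ?_ (max_le (hGsub J hJ) (by simpa using hInorm))
      simpa [sub_eq_add_neg] using Padic.nonarchimedean J (-I)
    have hcover : unitBall p = ⋃ J ∈ G, ballSet p (M:ℤ) (J - I) := by
      ext x
      simp only [unitBall, Set.mem_setOf_eq, Set.mem_iUnion, ballSet, exists_prop]
      constructor
      · intro hx
        have hxI : ‖x + I‖ ≤ 1 :=
          le_trans (Padic.nonarchimedean _ _) (max_le hx hInorm)
        obtain ⟨J, ⟨hJG, hJn⟩, -⟩ := hG (x + I) hxI
        refine ⟨J, hJG, ?_⟩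
        rw [show x - (J - I) = (x + I) - J by ring]
        exact hJn
      · rintro ⟨J, hJG, hJn⟩
        calc ‖x‖ = ‖(x - (J - I)) + (J - I)‖ := by ring_nf
          _ ≤ max ‖x - (J - I)‖ ‖J - I‖ := Padic.nonarchimedean _ _
          _ ≤ 1 := max_le (hJn.trans hpMle1) (hsub1 J hJG)
    have hdisj : Set.Pairwise (↑G)
        (Function.onFun Disjoint fun J => ballSet p (M:ℤ) (J - I)) := by
      intro J hJ J' hJ' hne
      rw [Function.onFun, Set.disjoint_left]
      intro x hx hx'
      simp only [ballSet, Set.mem_setOf_eq] at hx hx'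
      have hxu : ‖x‖ ≤ 1 := by
        calc ‖x‖ = ‖(x - (J - I)) + (J - I)‖ := by ring_nf
          _ ≤ max ‖x - (J - I)‖ ‖J - I‖ := Padic.nonarchimedean _ _
          _ ≤ 1 := max_le (hx.trans hpMle1) (hsub1 J hJ)
      have hxI : ‖x + I‖ ≤ 1 :=
        le_trans (Padic.nonarchimedean _ _) (max_le hxu hInorm)
      obtain ⟨K, -, hKuniq⟩ := hG (x + I) hxI
      have e1 : J = K := hKuniq J ⟨hJ, by rw [show (x+I) - J = x - (J - I) by ring]; exact hx⟩
      have e2 : J' = K :=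
        hKuniq J' ⟨hJ', by rw [show (x+I) - J' = x - (J' - I) by ring]; exact hx'⟩
      exact hne (e1.trans e2.symm)
    have hdecomp : (1:ℝ) = ∑ J ∈ G, ∫ z in ballSet p (M:ℤ) (J - I), Q₀ z ∂(haar p) := by
      rw [← hone, hcover]
      exact integral_biUnion_finset G (fun J _ => measurableSet_ballSet p _ _) hdisj
        (fun J _ => hint.integrableOn)
    rw [← Finset.add_sum_erase G _ hI] at hdecomp
    have hdiag : ∫ z in ballSet p (M:ℤ) (I - I), Q₀ z ∂(haar p) = A := by
      rw [sub_self, hAdef]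
    have hoff : ∀ J ∈ G.erase I, ∫ z in ballSet p (M:ℤ) (J - I), Q₀ z ∂(haar p)
        = Q₀ (J - I) * (p:ℝ) ^ (-(M:ℤ)) := by
      intro J hJ
      obtain ⟨hJne, hJG⟩ := Finset.mem_erase.mp hJ
      apply setIntegral_ballSet_of_norm_gt p Q₀ hrad
      by_contra hcon
      push_neg at hcon
      obtain ⟨K, -, hKuniq⟩ := hG J (hGsub J hJG)
      have e1 : J = K := hKuniq J ⟨hJG, by simpa using hpM.le⟩
      have e2 : I = K := hKuniq I ⟨hI, hcon⟩
      exact hJne (e1.trans e2.symm)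
    rw [hdiag, Finset.sum_congr rfl hoff] at hdecomp
    linarith
  have part1 : ∀ I : {I : ℚ_[p] // I ∈ G},
      0 < Wmat p Q₀ fc M G I I ∧
        ∑ J ∈ Finset.univ.erase I, |Wmat p Q₀ fc M G I J| < Wmat p Q₀ fc M G I I := by
    intro I
    have hIG := I.2
    have hfcI := hfc I.1 hIG
    have hdiagval : Wmat p Q₀ fc M G I I = fc I.1 * A := by simp [Wmat, hAdef]
    have hApos : (0:ℝ) < A := by linarith
    refine ⟨by rw [hdiagval]; positivity, ?_⟩
    have hsum : ∑ J ∈ Finset.univ.erase I, |Wmat p Q₀ fc M G I J|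
        = ∑ J ∈ G.erase I.1, fc I.1 * (Q₀ (J - I.1) * (p:ℝ) ^ (-(M:ℤ))) := by
      refine Finset.sum_bij
        (fun (J : {I : ℚ_[p] // I ∈ G}) (_ : J ∈ Finset.univ.erase I) => (J : ℚ_[p]))
        ?_ ?_ ?_ ?_
      · intro J hJ
        rcases Finset.mem_erase.mp hJ with ⟨hne, -⟩
        exact Finset.mem_erase.mpr ⟨fun h => hne (Subtype.ext h), J.2⟩
      · intro a ha b hb hab
        exact Subtype.ext hab
      · intro J hJ
        rcases Finset.mem_erase.mp hJ with ⟨hne, hJG⟩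
        refine ⟨⟨J, hJG⟩, Finset.mem_erase.mpr ⟨fun h => hne ?_, Finset.mem_univ _⟩, rfl⟩
        exact congrArg Subtype.val h
      · intro J hJ
        rcases Finset.mem_erase.mp hJ with ⟨hne, -⟩
        have hoffv : Wmat p Q₀ fc M G I J = fc I.1 * Q₀ (J.1 - I.1) * (p:ℝ)^(-(M:ℤ)) := by
          simp [Wmat, Ne.symm hne]
        rw [hoffv, abs_of_nonneg, mul_assoc]
        have := hpos (J.1 - I.1)
        positivity
    rw [hdiagval, hsum, ← Finset.mul_sum, key I.1 hIG]
    have hA' : 1 - A < A := by linarith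
    exact (mul_lt_mul_iff_right₀ hfcI).mpr hA'
  set W := Wmat p Q₀ fc M G with hWdef
  have hdom : ∀ k, ∑ j ∈ Finset.univ.erase k, ‖W k j‖ < ‖W k k‖ := by
    intro k
    have h := part1 k
    simpa [Real.norm_eq_abs, abs_of_pos h.1] using h.2
  have hdet : W.det ≠ 0 := det_ne_zero_of_sum_row_lt_diag hdom
  have hunit : IsUnit W := (Matrix.isUnit_iff_isUnit_det W).mpr (isUnit_iff_ne_zero.mpr hdet)
  have part3 : ∀ z ∈ spectrum ℂ (W.map Complex.ofReal), 0 < z.re := by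
    intro z hz
    set W' := W.map Complex.ofReal with hW'
    have hzeig : Module.End.HasEigenvalue (Matrix.toLin' W') z := by
      apply Module.End.HasEigenvalue.of_mem_spectrum
      have hEq : spectrum ℂ (Matrix.toLinAlgEquiv' W') = spectrum ℂ W' :=
        AlgEquiv.spectrum_eq Matrix.toLinAlgEquiv' W'
      have : Matrix.toLin' W' = Matrix.toLinAlgEquiv' W' := rfl
      rw [this, hEq]
      exact hz
    obtain ⟨k, hk⟩ := eigenvalue_mem_ball hzeig
    rw [mem_closedBall_iff_norm] at hk
    have hsum' : ∑ j ∈ Finset.univ.erase k, ‖W' k j‖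
        = ∑ j ∈ Finset.univ.erase k, |W k j| := by
      refine Finset.sum_congr rfl fun j _ => ?_
      simp [hW', Matrix.map_apply, Complex.norm_real, Real.norm_eq_abs]
    have hlt : ‖z - W' k k‖ < W k k := by
      rw [hsum'] at hk
      exact lt_of_le_of_lt hk (part1 k).2
    have hre : (W k k : ℝ) - z.re ≤ ‖z - W' k k‖ := by
      have h1 : |(W' k k - z).re| ≤ ‖W' k k - z‖ := Complex.abs_re_le_norm _
      have h2 : (W' k k - z).re = W k k - z.re := by
        simp [hW', Matrix.map_apply]
      rw [h2] at h1
      calc (W k k : ℝ) - z.re ≤ |(W k k : ℝ) - z.re| := le_abs_self _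
        _ ≤ ‖W' k k - z‖ := h1
        _ = ‖z - W' k k‖ := by rw [norm_sub_rev]
    linarith
  refine ⟨part1, hunit, part3, fun _ μ hμ => ?_⟩
  have hμC : (μ : ℂ) ∈ spectrum ℂ (W.map Complex.ofReal) := by
    rw [spectrum.mem_iff] at hμ ⊢
    intro hu
    apply hμ
    rw [Matrix.isUnit_iff_isUnit_det] at hu ⊢
    have hmap : (algebraMap ℝ (Matrix {I : ℚ_[p] // I ∈ G} {I : ℚ_[p] // I ∈ G} ℝ) μ - W).map
        Complex.ofReal = algebraMap ℂ _ (μ:ℂ) - W.map Complex.ofReal := by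
      ext i j
      by_cases h : i = j <;>
        simp [Matrix.map_apply, Matrix.sub_apply, Matrix.algebraMap_matrix_apply, h]
    have hdet1 : ((algebraMap ℝ (Matrix {I : ℚ_[p] // I ∈ G} {I : ℚ_[p] // I ∈ G} ℝ) μ
        - W).det : ℂ) = (algebraMap ℂ _ (μ:ℂ) - W.map Complex.ofReal).det := by
      rw [← hmap]
      exact RingHom.map_det Complex.ofRealHom _
    rw [isUnit_iff_ne_zero] at hu ⊢
    intro h0
    apply hu
    rw [← hdet1, h0, Complex.ofReal_zero]
  have := part3 _ hμC
  simpa using this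

end PadicES
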